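/- Let G be a graph of order n with m edges whose Seidel matrix is singular. Then m ≡ (n-1)/4 (mod 2). -/

import Mathlib

open Matrix

def seidelMatrix {n : ℕ} (G : SimpleGraph (Fin n)) [DecidableRel G.Adj] :
    Matrix (Fin n) (Fin n) ℤ :=
  Matrix.of fun i j => if i = j then 0 else if G.Adj i j then -1 else 1

open Finset

lemma det_J_sub_one (R : Type*) [CommRing R] (n : ℕ) :
    (Matrix.of fun i j : Fin n => if i = j then (0:R) else 1).det
      = (-1)^(n+1) * ((n:R) - 1) := by
  have h : (Matrix.of fun i j : Fin n => if i = j then (0:R) else 1)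
      = -((1 : Matrix (Fin n) (Fin n) R) +
          Matrix.replicateCol Unit (fun _ : Fin n => (-1:R)) * Matrix.replicateRow Unit (fun _ : Fin n => (1:R))) := by
    ext a b
    by_cases h : a = b <;>
      simp [Matrix.one_apply, h, Matrix.mul_apply]
  rw [h, Matrix.det_neg, Matrix.det_one_add_replicateCol_mul_replicateRow]
  have h2 : (fun _ : Fin n => (1:R)) ⬝ᵥ (fun _ => (-1:R)) = -(n:R) := by
    simp [dotProduct]
  rw [h2]
  simp only [Fintype.card_fin]
  ring

section F2

variable {n : ℕ}

private abbrev N2 (n : ℕ) : Matrix (Fin n) (Fin n) (ZMod 2) :=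
  Matrix.of fun a b => if a = b then 0 else 1

-- sum helpers
lemma sum_one_off (i : Fin n) :
    (∑ k : Fin n, if k = i then (0:ZMod 2) else 1) = (n : ZMod 2) + 1 := by
  have : (∑ k : Fin n, if k = i then (0:ZMod 2) else 1)
      = ∑ k : Fin n, ((1:ZMod 2) - if k = i then 1 else 0) := by
    apply Finset.sum_congr rfl; intro k _; by_cases h : k = i <;> simp [h]
  rw [this, Finset.sum_sub_distrib]
  simp [Finset.sum_ite_eq' Finset.univ i (fun _ => (1:ZMod 2))]
  have h1 : (-1 : ZMod 2) = 1 := by decide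
  ring_nf
  rw [h1]

lemma sum_two_off {i j : Fin n} (hij : i ≠ j) :
    (∑ k : Fin n, if k = i ∨ k = j then (0:ZMod 2) else 1) = (n : ZMod 2) := by
  have : (∑ k : Fin n, if k = i ∨ k = j then (0:ZMod 2) else 1)
      = ∑ k : Fin n, ((1:ZMod 2) - ((if k = i then 1 else 0) + (if k = j then 1 else 0))) := by
    apply Finset.sum_congr rfl; intro k _
    by_cases h1 : k = i <;> by_cases h2 : k = j <;> simp_all [hij]
  rw [this, Finset.sum_sub_distrib, Finset.sum_add_distrib]
  simp [Finset.sum_ite_eq' Finset.univ i (fun _ => (1:ZMod 2)),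
    Finset.sum_ite_eq' Finset.univ j (fun _ => (1:ZMod 2))]
  have h2 : (2 : ZMod 2) = 0 := by decide
  ring_nf
  exact h2

lemma det_N2 : (N2 n).det = (n : ZMod 2) + 1 := by
  rw [det_J_sub_one (ZMod 2) n]
  have h1 : (-1 : ZMod 2) = 1 := by decide
  rw [h1, one_pow, one_mul, sub_eq_add_neg, h1]

lemma det_rankone (i : Fin n) :
    (Matrix.updateRow (N2 n) i (Pi.single i 1)).det = (n : ZMod 2) := by
  have h : Matrix.updateRow (N2 n) i (Pi.single i 1)
      = (1 : Matrix (Fin n) (Fin n) (ZMod 2)) +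
        Matrix.replicateCol Unit (fun k : Fin n => if k = i then (0:ZMod 2) else 1) *
        Matrix.replicateRow Unit (fun _ : Fin n => (1:ZMod 2)) := by
    ext a b
    simp only [Matrix.updateRow_apply, Matrix.add_apply, Matrix.one_apply,
      Matrix.mul_apply, Matrix.of_apply, Pi.single_apply, Matrix.replicateCol_apply,
      Matrix.replicateRow_apply, Finset.univ_unique, Finset.sum_singleton, mul_one]
    split_ifs <;> simp_all <;> decide
  rw [h, Matrix.det_one_add_replicateCol_mul_replicateRow]
  have h3 : (fun _ : Fin n => (1:ZMod 2)) ⬝ᵥ (fun k => if k = i then (0:ZMod 2) else 1)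
      = (n : ZMod 2) + 1 := by
    simp [dotProduct, sum_one_off]
  rw [h3]
  have h4 : ∀ x : ZMod 2, 1 + (x + 1) = x := by decide
  exact h4 _

lemma det_L1 {i j : Fin n} (hij : i ≠ j) :
    (Matrix.updateRow (N2 n) i (Pi.single j 1)).det = 1 := by
  have hsplit : (Pi.single j (1:ZMod 2)) = (N2 n) j + fun _ => 1 := by
    funext b
    simp only [Pi.add_apply, Matrix.of_apply, N2]
    by_cases hb : b = j
    · subst hb; rw [Pi.single_eq_same, if_pos rfl]; decide
    · rw [Pi.single_eq_of_ne hb, if_neg (fun h => hb h.symm)]; decide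
  rw [hsplit, Matrix.det_updateRow_add]
  have hz : (Matrix.updateRow (N2 n) i ((N2 n) j)).det = 0 := by
    apply Matrix.det_zero_of_row_eq hij
    rw [Matrix.updateRow_self, Matrix.updateRow_ne (Ne.symm hij)]
  have hsplit2 : (fun _ : Fin n => (1:ZMod 2)) = (N2 n) i + Pi.single i 1 := by
    funext b
    simp only [Pi.add_apply, Matrix.of_apply, N2]
    by_cases hb : b = i
    · subst hb; rw [Pi.single_eq_same, if_pos rfl]; decide
    · rw [Pi.single_eq_of_ne hb, if_neg (fun h => hb h.symm)]; decide
  rw [hz, hsplit2, Matrix.det_updateRow_add, Matrix.updateRow_eq_self, det_N2,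
    det_rankone]
  have h4 : ∀ x : ZMod 2, 0 + (x + 1 + x) = 1 := by decide
  exact h4 _

lemma det_L2 {i j : Fin n} (hij : i ≠ j) :
    (Matrix.updateRow (Matrix.updateRow (N2 n) i (Pi.single j 1)) j (Pi.single i 1)).det
      = (n : ZMod 2) + 1 := by
  have h : Matrix.updateRow (Matrix.updateRow (N2 n) i (Pi.single j 1)) j (Pi.single i 1)
      = (((1 : Matrix (Fin n) (Fin n) (ZMod 2)) +
          Matrix.replicateCol Unit (fun k : Fin n => if k = i ∨ k = j then (0:ZMod 2) else 1) *
          Matrix.replicateRow Unit (fun _ : Fin n => (1:ZMod 2))).submatrix (Equiv.swap i j) id) := by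
    ext a b
    simp only [Matrix.updateRow_apply, Matrix.submatrix_apply, Matrix.add_apply,
      Matrix.one_apply, Matrix.mul_apply, Matrix.of_apply, Pi.single_apply,
      Matrix.replicateCol_apply, Matrix.replicateRow_apply, Finset.univ_unique, Finset.sum_singleton,
      mul_one, id]
    by_cases ha : a = j
    · subst ha
      rw [Equiv.swap_apply_right]
      split_ifs <;> first | rfl | decide | (exfalso; tauto)
    · by_cases hai : a = i
      · subst hai
        rw [Equiv.swap_apply_left]
        split_ifs <;> first | rfl | decide | (exfalso; tauto)
      · rw [Equiv.swap_apply_of_ne_of_ne hai ha]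
        split_ifs <;> first | rfl | decide | (exfalso; tauto)
  rw [h]
  have hperm := Matrix.det_permute (Equiv.swap i j)
      ((1 : Matrix (Fin n) (Fin n) (ZMod 2)) +
        Matrix.replicateCol Unit (fun k : Fin n => if k = i ∨ k = j then (0:ZMod 2) else 1) *
        Matrix.replicateRow Unit (fun _ : Fin n => (1:ZMod 2)))
  rw [hperm, Matrix.det_one_add_replicateCol_mul_replicateRow]
  have hs : (fun _ : Fin n => (1:ZMod 2)) ⬝ᵥ (fun k => if k = i ∨ k = j then (0:ZMod 2) else 1)
      = (n : ZMod 2) := by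
    simp [dotProduct, sum_two_off hij]
  rw [hs]
  have hone : ((Equiv.Perm.sign (Equiv.swap i j) : ℤ) : ZMod 2) = 1 := by
    rcases Int.units_eq_one_or (Equiv.Perm.sign (Equiv.swap i j)) with h1 | h1 <;>
      rw [h1] <;> decide
  rw [hone, one_mul, add_comm]


lemma updateRow_comm' {R : Type*} {m : Type*} [DecidableEq m] (M : Matrix m m R)
    {i j : m} (h : i ≠ j) (u v : m → R) :
    (M.updateRow i u).updateRow j v = (M.updateRow j v).updateRow i u := by
  ext a b
  simp only [Matrix.updateRow_apply]
  split_ifs with h1 h2 <;> simp_all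

lemma seidel_transpose {n : ℕ} (G : SimpleGraph (Fin n)) [DecidableRel G.Adj] :
    (seidelMatrix G)ᵀ = seidelMatrix G := by
  ext a b
  show (if b = a then (0:ℤ) else if G.Adj b a then -1 else 1)
      = (if a = b then (0:ℤ) else if G.Adj a b then -1 else 1)
  exact if_congr eq_comm rfl (if_congr (G.adj_comm b a) rfl rfl)

lemma seidel_map_two {n : ℕ} (G : SimpleGraph (Fin n)) [DecidableRel G.Adj] :
    (seidelMatrix G).map (Int.cast : ℤ → ZMod 2) = N2 n := by
  ext a b
  simp only [Matrix.map_apply, seidelMatrix, Matrix.of_apply, N2]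
  split_ifs <;> decide

lemma single_map_two {n : ℕ} (j : Fin n) :
    (Int.cast : ℤ → ZMod 2) ∘ Pi.single j (1:ℤ) = Pi.single j (1:ZMod 2) := by
  funext b
  by_cases hb : b = j
  · subst hb; simp
  · simp [Pi.single_eq_of_ne hb]

lemma seidel_det_mod8 : ∀ (m : ℕ) {n : ℕ} (G : SimpleGraph (Fin n))
    [inst : DecidableRel G.Adj], G.edgeFinset.card = m →
    ((seidelMatrix G).det : ZMod 8)
      = (-1)^(n+1) * ((n : ZMod 8) - 1) + 4 * n * m := by
  intro m
  induction m with
  | zero =>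
    intro n G inst hcard
    have hbot : G = ⊥ := SimpleGraph.edgeFinset_eq_empty.mp (Finset.card_eq_zero.mp hcard)
    have hno : ∀ a b : Fin n, ¬ G.Adj a b := by
      intro a b hab
      rw [hbot] at hab
      exact hab
    have hmat : seidelMatrix G = Matrix.of fun a b : Fin n => if a = b then (0:ℤ) else 1 := by
      ext a b
      simp [seidelMatrix, hno a b]
    rw [hmat, det_J_sub_one ℤ n]
    push_cast
    ring
  | succ m ih =>
    intro n G inst hcard
    obtain ⟨e, he⟩ := Finset.card_pos.mp (by omega : 0 < G.edgeFinset.card)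
    revert he
    refine Sym2.ind (fun i j he => ?_) e
    have hadj : G.Adj i j := G.mem_edgeSet.mp (SimpleGraph.mem_edgeFinset.mp he)
    have hadj' : G.Adj j i := hadj.symm
    have hij : i ≠ j := hadj.ne
    set G' : SimpleGraph (Fin n) :=
      G.deleteEdges (↑({s(i,j)} : Finset (Sym2 (Fin n)))) with hG'
    haveI instG' : DecidableRel G'.Adj := fun a b =>
      decidable_of_iff (G.Adj a b ∧ ¬ s(a,b) = s(i,j)) (by
        rw [hG', SimpleGraph.deleteEdges_adj]
        simp)
    have hcard' : G'.edgeFinset.card = m := by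
      have h1 : G'.edgeFinset = G.edgeFinset \ ({s(i,j)} : Finset (Sym2 (Fin n))) :=
        SimpleGraph.edgeFinset_deleteEdges (G := G) ({s(i,j)} : Finset (Sym2 (Fin n)))
      rw [h1, Finset.card_sdiff_of_subset (Finset.singleton_subset_iff.mpr he), hcard]
      simp
    have ihG' := ih G' hcard'
    set M := seidelMatrix G' with hM
    have hMt : Mᵀ = M := seidel_transpose G'
    have hnadj : ∀ a b : Fin n, s(a,b) = s(i,j) → ¬ G'.Adj a b := by
      intro a b hab h
      rw [hG', SimpleGraph.deleteEdges_adj] at h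
      exact h.2 (by simpa using hab)
    have hiff : ∀ a b : Fin n, s(a,b) ≠ s(i,j) → (G'.Adj a b ↔ G.Adj a b) := by
      intro a b hne
      rw [hG', SimpleGraph.deleteEdges_adj]
      simp [hne]
    have hMentry : ∀ a b : Fin n, s(a,b) ≠ s(i,j) → seidelMatrix G a b = M a b := by
      intro a b hne
      exact (if_congr Iff.rfl rfl (if_congr (hiff a b hne).symm rfl rfl))
    have hMij : M i j = 1 := by
      show (if i = j then (0:ℤ) else if G'.Adj i j then -1 else 1) = 1
      rw [if_neg hij, if_neg (hnadj i j rfl)]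
    have hMji : M j i = 1 := by
      show (if j = i then (0:ℤ) else if G'.Adj j i then -1 else 1) = 1
      rw [if_neg (Ne.symm hij), if_neg (hnadj j i (Sym2.eq_swap))]
    have hSGij : seidelMatrix G i j = -1 := by
      show (if i = j then (0:ℤ) else if G.Adj i j then -1 else 1) = -1
      rw [if_neg hij, if_pos hadj]
    have hSGji : seidelMatrix G j i = -1 := by
      show (if j = i then (0:ℤ) else if G.Adj j i then -1 else 1) = -1
      rw [if_neg (Ne.symm hij), if_pos hadj']
    have hSG : seidelMatrix G
        = (M.updateRow i (M i + (-2) • Pi.single j 1)).updateRow j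
            (M j + (-2) • Pi.single i 1) := by
      ext a b
      simp only [Matrix.updateRow_apply, Pi.add_apply, Pi.smul_apply, Pi.single_apply,
        smul_eq_mul]
      by_cases haj : a = j
      · rw [if_pos haj]
        by_cases hbi : b = i
        · rw [if_pos hbi, haj, hbi, hSGji, hMji]
          norm_num
        · rw [if_neg hbi, haj, hMentry j b (fun h => by
            rcases Sym2.eq_iff.mp h with ⟨h1, h2⟩ | ⟨h1, h2⟩
            · exact hij h1.symm
            · exact hbi h2)]
          ring
      · rw [if_neg haj]
        by_cases hai : a = i
        · rw [if_pos hai]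
          by_cases hbj : b = j
          · rw [if_pos hbj, hai, hbj, hSGij, hMij]
            norm_num
          · rw [if_neg hbj, hai, hMentry i b (fun h => by
              rcases Sym2.eq_iff.mp h with ⟨h1, h2⟩ | ⟨h1, h2⟩
              · exact hbj h2
              · exact hij h1)]
            ring
        · rw [if_neg hai, hMentry a b (fun h => by
            rcases Sym2.eq_iff.mp h with ⟨h1, h2⟩ | ⟨h1, h2⟩
            · exact hai h1
            · exact haj h1)]
    -- determinant expansion
    have hXj : (M.updateRow i (M i + (-2) • Pi.single j 1)) j = M j :=
      Matrix.updateRow_ne (Ne.symm hij)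
    have h1 : ((M.updateRow i (M i + (-2) • Pi.single j 1)).updateRow j
          (M j + (-2) • Pi.single i 1)).det
        = (M.updateRow i (M i + (-2) • Pi.single j 1)).det
          + (-2) * ((M.updateRow i (M i + (-2) • Pi.single j 1)).updateRow j
              (Pi.single i 1)).det := by
      rw [Matrix.det_updateRow_add, Matrix.det_updateRow_smul, ← hXj,
        Matrix.updateRow_eq_self]
    have h2 : (M.updateRow i (M i + (-2) • Pi.single j 1)).det
        = M.det + (-2) * (M.updateRow i (Pi.single j 1)).det := by
      rw [Matrix.det_updateRow_add, Matrix.det_updateRow_smul, Matrix.updateRow_eq_self]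
    have hYi : (M.updateRow j (Pi.single i 1)) i = M i := Matrix.updateRow_ne hij
    have h3 : ((M.updateRow i (M i + (-2) • Pi.single j 1)).updateRow j
          (Pi.single i 1)).det
        = (M.updateRow j (Pi.single i 1)).det
          + (-2) * ((M.updateRow i (Pi.single j 1)).updateRow j (Pi.single i 1)).det := by
      rw [updateRow_comm' M hij, Matrix.det_updateRow_add, Matrix.det_updateRow_smul,
        ← hYi, Matrix.updateRow_eq_self, updateRow_comm' M (Ne.symm hij)]
    -- adjugate symmetry
    have hAB : (M.updateRow j (Pi.single i 1)).det = (M.updateRow i (Pi.single j 1)).det := by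
      rw [← Matrix.adjugate_apply, ← Matrix.adjugate_apply]
      have hsym : (M.adjugate)ᵀ = M.adjugate := by
        rw [Matrix.adjugate_transpose, hMt]
      calc M.adjugate i j = (M.adjugate)ᵀ j i := rfl
        _ = M.adjugate j i := by rw [hsym]
    -- mod 2 facts
    have hA2 : (((M.updateRow i (Pi.single j 1)).det : ℤ) : ZMod 2) = 1 := by
      rw [show (((M.updateRow i (Pi.single j 1)).det : ℤ) : ZMod 2)
          = (Int.castRingHom (ZMod 2)) ((M.updateRow i (Pi.single j 1)).det) from rfl,
        RingHom.map_det, RingHom.mapMatrix_apply, Matrix.map_updateRow]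
      rw [show (M.map (Int.castRingHom (ZMod 2)) : Matrix (Fin n) (Fin n) (ZMod 2))
          = N2 n from seidel_map_two G', show ((Int.castRingHom (ZMod 2)) ∘ Pi.single j 1 : Fin n → ZMod 2)
          = Pi.single j 1 from single_map_two j]
      exact det_L1 hij
    have hC2 : ((((M.updateRow i (Pi.single j 1)).updateRow j (Pi.single i 1)).det : ℤ)
        : ZMod 2) = (n : ZMod 2) + 1 := by
      rw [show ((((M.updateRow i (Pi.single j 1)).updateRow j (Pi.single i 1)).det : ℤ) : ZMod 2)
          = (Int.castRingHom (ZMod 2))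
              (((M.updateRow i (Pi.single j 1)).updateRow j (Pi.single i 1)).det) from rfl,
        RingHom.map_det, RingHom.mapMatrix_apply, Matrix.map_updateRow, Matrix.map_updateRow]
      rw [show (M.map (Int.castRingHom (ZMod 2)) : Matrix (Fin n) (Fin n) (ZMod 2))
          = N2 n from seidel_map_two G',
        show ((Int.castRingHom (ZMod 2)) ∘ Pi.single j 1 : Fin n → ZMod 2)
          = Pi.single j 1 from single_map_two j,
        show ((Int.castRingHom (ZMod 2)) ∘ Pi.single i 1 : Fin n → ZMod 2)
          = Pi.single i 1 from single_map_two i]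
      exact det_L2 hij
    obtain ⟨a, ha⟩ : (2:ℤ) ∣ ((M.updateRow i (Pi.single j 1)).det - 1) := by
      apply (ZMod.intCast_zmod_eq_zero_iff_dvd _ 2).mp
      push_cast
      rw [← Int.cast_det, hA2]
      ring
    obtain ⟨c, hc⟩ : (2:ℤ) ∣ (((M.updateRow i (Pi.single j 1)).updateRow j
        (Pi.single i 1)).det - ((n:ℤ) + 1)) := by
      apply (ZMod.intCast_zmod_eq_zero_iff_dvd _ 2).mp
      push_cast
      rw [← Int.cast_det, hC2]
      ring
    have hfinal : (seidelMatrix G).det = M.det + 4*(n:ℤ) + 8*(c - a) := by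
      rw [hSG, h1, h2, h3, hAB]
      linear_combination (-4:ℤ) * ha + 4 * hc
    rw [hfinal]
    push_cast
    rw [← Int.cast_det, ihG']
    have h8 : ((8:ℤ) : ZMod 8) = 0 := by decide
    push_cast at h8 ⊢
    ring_nf
    linear_combination (((c:ZMod 8) - a)) * h8

theorem seidel_singular_size_mod_two {n : ℕ} (G : SimpleGraph (Fin n))
    [DecidableRel G.Adj]
    (hsing : (seidelMatrix G).det = 0) :
    G.edgeFinset.card % 2 = ((n - 1) / 4) % 2 := by
  have hkey := seidel_det_mod8 G.edgeFinset.card G rfl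
  rw [hsing] at hkey
  have h8 : (8:ℤ) ∣ ((-1)^(n+1) * ((n:ℤ) - 1) + 4 * n * G.edgeFinset.card) := by
    apply (ZMod.intCast_zmod_eq_zero_iff_dvd _ 8).mp
    push_cast
    push_cast at hkey
    rw [← hkey]
  set m := G.edgeFinset.card with hm
  rcases Nat.even_or_odd n with ⟨t, ht⟩ | ⟨t, ht⟩
  · have hpow : (-1:ℤ)^(n+1) = -1 := Odd.neg_one_pow ⟨t, by omega⟩
    rw [hpow] at h8
    obtain ⟨c, hc⟩ := h8
    have hcc : -(2*(t:ℤ) - 1) + 4*(2*(t:ℤ))*m = 8*c := by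
      have htz : (n:ℤ) = 2*t := by exact_mod_cast (by omega : n = 2*t)
      rw [htz] at hc
      linear_combination hc
    have hcc2 : -(2*(t:ℤ) - 1) + 8*((t:ℤ)*m) = 8*c := by linear_combination hcc
    generalize (t:ℤ) * (m:ℤ) = u at hcc2
    omega
  · have hpow : (-1:ℤ)^(n+1) = 1 := Even.neg_one_pow ⟨t+1, by omega⟩
    rw [hpow] at h8
    obtain ⟨c, hc⟩ := h8
    have hcc : 2*(t:ℤ) + 4*m + 8*((t:ℤ)*m) = 8*c := by
      have htz : (n:ℤ) = 2*t + 1 := by exact_mod_cast (by omega : n = 2*t + 1)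
      rw [htz] at hc
      linear_combination hc
    generalize (t:ℤ) * (m:ℤ) = u at hcc
    omega
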